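/- Two-agent symmetric case with quadratic feedback: let β = 2, α_1 = α_2 = 1, γ = 1/2 and r ∈ (0,1), and let g(x) = (1−r)(x²/(x²+(1−x)²) − x) + r(1/2 − x) for x ∈ (0,1). If r ≥ 1/2, then x = 1/2 is the unique zero of g in (0,1). If r < 1/2, then the zeros of g in (0,1) are exactly the three points 1/2, 1/2 + (1/2)√(1−2r) and 1/2 − (1/2)√(1−2r). -/
import Mathlib


/-- in the two-agent symmetric model with quadratic feedback
(`β = 2`, `α₁ = α₂ = 1`, `γ = 1/2`) and labor share `r ∈ (0,1)`, the drift
`g(x) = (1-r)(x²/(x²+(1-x)²) - x) + r(1/2 - x)` has `x = 1/2` as its unique zero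
in `(0,1)` when `r ≥ 1/2`, and exactly the three zeros
`1/2`, `1/2 + (1/2)√(1-2r)`, `1/2 - (1/2)√(1-2r)` in `(0,1)` when `r < 1/2`. -/
theorem two_agent_quadratic_symmetric_fixed_points
    (r : ℝ) (hr0 : 0 < r) (hr1 : r < 1)
    (g : ℝ → ℝ)
    (hg : ∀ x : ℝ, g x = (1 - r) * (x ^ 2 / (x ^ 2 + (1 - x) ^ 2) - x)
      + r * (1 / 2 - x)) :
    ((1 / 2 : ℝ) ≤ r → ∀ x : ℝ, 0 < x → x < 1 → (g x = 0 ↔ x = 1 / 2)) ∧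
    (r < 1 / 2 → ∀ x : ℝ, 0 < x → x < 1 →
      (g x = 0 ↔ x = 1 / 2 ∨ x = 1 / 2 + (1 / 2) * Real.sqrt (1 - 2 * r)
        ∨ x = 1 / 2 - (1 / 2) * Real.sqrt (1 - 2 * r))) := by
  constructor
  · intro hr x hx0 hx1
    have hD : (0:ℝ) < x ^ 2 + (1 - x) ^ 2 := by nlinarith
    have key : g x = (-2 * (x - 1/2) * ((x - 1/2) ^ 2 - (1 - 2*r)/4)) /
        (x ^ 2 + (1 - x) ^ 2) := by
      rw [hg]; field_simp; ring
    rw [key, div_eq_zero_iff]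
    constructor
    · rintro (h | h)
      · rcases mul_eq_zero.mp h with h' | h'
        · have : x - 1/2 = 0 := by
            rcases mul_eq_zero.mp h' with h'' | h''
            · norm_num at h''
            · exact h''
          linarith
        · have hsq : (x - 1/2) ^ 2 = 0 :=
            le_antisymm (by nlinarith) (sq_nonneg _)
          have := pow_eq_zero_iff (n := 2) (by norm_num) |>.mp hsq
          linarith
      · exact absurd h hD.ne'
    · intro h; left; rw [h]; ring
  · intro hr x hx0 hx1
    have hD : (0:ℝ) < x ^ 2 + (1 - x) ^ 2 := by nlinarith
    set s := Real.sqrt (1 - 2 * r) with hs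
    have hs2 : s ^ 2 = 1 - 2 * r := Real.sq_sqrt (by linarith)
    have key : g x = (-2 * (x - 1/2) * ((x - 1/2) ^ 2 - (1 - 2*r)/4)) /
        (x ^ 2 + (1 - x) ^ 2) := by
      rw [hg]; field_simp; ring
    rw [key, div_eq_zero_iff]
    constructor
    · rintro (h | h)
      · rcases mul_eq_zero.mp h with h' | h'
        · left
          have : x - 1/2 = 0 := by
            rcases mul_eq_zero.mp h' with h'' | h''
            · norm_num at h''
            · exact h''
          linarith
        · have hfac : (x - 1/2 - s/2) * (x - 1/2 + s/2) = 0 := by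
            linear_combination h' - (1/4 : ℝ) * hs2
          rcases mul_eq_zero.mp hfac with h'' | h''
          · right; left; linarith
          · right; right; linarith
      · exact absurd h hD.ne'
    · rintro (h | h | h)
      · left; rw [h]; ring
      · left; rw [h]; linear_combination (-(s/4)) * hs2
      · left; rw [h]; linear_combination (s/4) * hs2
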